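/- Let a > 0, m > 0, x₀ > 0 and let β > α ≥ 0 be real numbers with β > 0. Let A = {(x,y) : 0 < x < x₀, 0 < y < x^m} and h(x,y) = a·x^α·y^β. Then there exist constants c, C > 0 (depending on a, m, α, β) such that for all sufficiently small ε > 0: c·x₀^((β-α)/β)·ε^(1/β) < |{(x,y) ∈ A : |h(x,y)| < ε}| < C·x₀^((β-α)/β)·ε^(1/β). -/

import Mathlib

open MeasureTheory

open Set intervalIntegral

set_option maxHeartbeats 1000000 in
/-- Lemma 2.3 a): for `β > α ≥ 0`, the area of the sublevel set of `h(x,y) = a x^α y^β`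
on the curved triangle `{0 < x < x₀, 0 < y < x^m}` is comparable to
`x₀^((β-α)/β) * ε^(1/β)` for small `ε`. -/
theorem monomial_sublevel_beta_gt_alpha
    (a m x₀ α β : ℝ) (ha : 0 < a) (hm : 0 < m) (hx₀ : 0 < x₀)
    (hα : 0 ≤ α) (hβ : α < β) :
    ∃ c C : ℝ, 0 < c ∧ 0 < C ∧ ∃ ε₀ > 0, ∀ ε : ℝ, 0 < ε → ε < ε₀ →
      c * x₀ ^ ((β - α) / β) * ε ^ (1 / β) <
        (volume {p : ℝ × ℝ | (0 < p.1 ∧ p.1 < x₀ ∧ 0 < p.2 ∧ p.2 < p.1 ^ m) ∧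
          |a * p.1 ^ α * p.2 ^ β| < ε}).toReal ∧
      (volume {p : ℝ × ℝ | (0 < p.1 ∧ p.1 < x₀ ∧ 0 < p.2 ∧ p.2 < p.1 ^ m) ∧
          |a * p.1 ^ α * p.2 ^ β| < ε}).toReal <
        C * x₀ ^ ((β - α) / β) * ε ^ (1 / β) := by
  have hβ0 : 0 < β := lt_of_le_of_lt hα hβ
  have hβne : β ≠ 0 := hβ0.ne'
  set P : ℝ := a ^ (-(1/β)) with hP
  have hP0 : 0 < P := Real.rpow_pos_of_pos ha _
  set r : ℝ := -(α/β) with hrdef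
  have hr1 : r + 1 = (β - α) / β := by field_simp [hrdef]; rw [hrdef, add_mul, neg_mul, div_mul_cancel₀ α hβne]; ring
  have hβα : 0 < β - α := by linarith
  have hr1pos : 0 < r + 1 := by
    rw [hr1]; exact div_pos (by linarith) hβ0
  have hrgt : -1 < r := by linarith
  set X : ℝ := x₀ ^ ((β - α) / β) with hX
  have hXpos : 0 < X := Real.rpow_pos_of_pos hx₀ _
  have hXr : X = x₀ ^ r * x₀ := by rw [hX, ← hr1, Real.rpow_add_one hx₀.ne']
  refine ⟨P / 4, 2 * P * (β / (β - α)), by positivity, by positivity,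
    a * x₀ ^ α * (x₀ / 2) ^ (m * β), by positivity, ?_⟩
  intro ε hε hεlt
  set E : ℝ := ε ^ (1 / β) with hE
  have hEpos : 0 < E := Real.rpow_pos_of_pos hε _
  set S : Set (ℝ × ℝ) := {p : ℝ × ℝ | (0 < p.1 ∧ p.1 < x₀ ∧ 0 < p.2 ∧ p.2 < p.1 ^ m) ∧
      |a * p.1 ^ α * p.2 ^ β| < ε} with hS
  set g : ℝ → ℝ := fun x => (ε / a) ^ (1/β) * x ^ r with hg
  have key : ∀ x : ℝ, 0 < x → (ε / (a * x ^ α)) ^ (1/β) = g x := by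
    intro x hx0
    have hxα : 0 < x ^ α := Real.rpow_pos_of_pos hx0 _
    rw [hg, div_mul_eq_div_div, Real.div_rpow (by positivity) hxα.le,
      ← Real.rpow_mul hx0.le, mul_one_div, div_eq_mul_inv,
      ← Real.rpow_neg hx0.le]
  have hEP : (ε / a) ^ (1/β) = E * P := by
    rw [Real.div_rpow hε.le ha.le, hP, Real.rpow_neg ha.le, div_eq_mul_inv, hE]
  -- inclusion into region under the curve g
  have hsub : S ⊆ regionBetween (fun _ => (0:ℝ)) g (Ioo 0 x₀) := by
    rintro ⟨x, y⟩ ⟨⟨hx0, hxx₀, hy0, _⟩, habs⟩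
    have hxα : 0 < x ^ α := Real.rpow_pos_of_pos hx0 _
    have hlt : a * x ^ α * y ^ β < ε := lt_of_abs_lt habs
    have hyβ : y ^ β < ε / (a * x ^ α) := by
      rw [lt_div_iff₀ (by positivity)]; linarith [hlt]
    have hy : y < (ε / (a * x ^ α)) ^ (1/β) := by
      have h2 : (y ^ β) ^ (1/β) < (ε / (a * x ^ α)) ^ (1/β) :=
        Real.rpow_lt_rpow (by positivity) hyβ (by positivity)
      calc y = (y ^ β) ^ (1/β) := by rw [one_div, Real.rpow_rpow_inv hy0.le hβne]
        _ < _ := h2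
    exact ⟨⟨hx0, hxx₀⟩, hy0, by rwa [key x hx0] at hy⟩
  -- integrability and the value of the integral
  have hg_int : IntegrableOn g (Ioo 0 x₀) := by
    have h1 : IntervalIntegrable (fun x : ℝ => x ^ r) volume 0 x₀ :=
      intervalIntegral.intervalIntegrable_rpow' hrgt
    rw [intervalIntegrable_iff, uIoc_of_le hx₀.le] at h1
    exact (h1.mono_set Ioo_subset_Ioc_self).const_mul _
  have hvol_reg : volume (regionBetween (fun _ => (0:ℝ)) g (Ioo 0 x₀))
      = ENNReal.ofReal (∫ x in Ioo 0 x₀, g x) := by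
    rw [Measure.volume_eq_prod,
      volume_regionBetween_eq_integral integrableOn_zero hg_int measurableSet_Ioo
        (fun x hx => by
          have hx0 : 0 < x := hx.1
          have : 0 < g x := by rw [hg]; positivity
          exact this.le)]
    congr 1
    apply setIntegral_congr_fun measurableSet_Ioo
    intro x _
    simp [Pi.sub_apply]
  have hInt : ∫ x in Ioo 0 x₀, g x = (ε/a)^(1/β) * (x₀ ^ (r+1) / (r+1)) := by
    have h7 : (∫ x in (0:ℝ)..x₀, x ^ r) = x₀ ^ (r+1) / (r+1) := by
      rw [integral_rpow (Or.inl hrgt), Real.zero_rpow hr1pos.ne']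
      ring
    rw [hg, MeasureTheory.integral_const_mul]
    congr 1
    rw [← MeasureTheory.integral_Ioc_eq_integral_Ioo,
      ← intervalIntegral.integral_of_le hx₀.le]
    exact h7
  have hIntpos : 0 < ∫ x in Ioo 0 x₀, g x := by
    rw [hInt]
    have : 0 < x₀ ^ (r+1) := Real.rpow_pos_of_pos hx₀ _
    positivity
  have hSle : volume S ≤ ENNReal.ofReal (∫ x in Ioo 0 x₀, g x) :=
    hvol_reg ▸ measure_mono hsub
  have hS_ne_top : volume S ≠ ⊤ :=
    ne_top_of_le_ne_top ENNReal.ofReal_ne_top hSle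
  have hupper : (volume S).toReal ≤ (ε/a)^(1/β) * (x₀ ^ (r+1) / (r+1)) := by
    have h := ENNReal.toReal_mono ENNReal.ofReal_ne_top hSle
    rwa [ENNReal.toReal_ofReal hIntpos.le, hInt] at h
  -- lower bound: rectangle
  set yε : ℝ := (ε / (a * x₀ ^ α)) ^ (1/β) with hyε
  have hyε0 : 0 < yε := Real.rpow_pos_of_pos (by positivity) _
  have hyεβ : yε ^ β = ε / (a * x₀ ^ α) := by
    rw [hyε, one_div, Real.rpow_inv_rpow (by positivity) hβne]
  have hyεeq : yε = E * P * x₀ ^ r := by rw [hyε, key x₀ hx₀, hg, hEP]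
  have hyεlt : yε < (x₀/2) ^ m := by
    have h1 : ε / (a * x₀ ^ α) < (x₀/2) ^ (m * β) := by
      rw [div_lt_iff₀ (by positivity)]; nlinarith [hεlt]
    have h2 : (ε / (a * x₀ ^ α)) ^ (1/β) < ((x₀/2) ^ (m * β)) ^ (1/β) :=
      Real.rpow_lt_rpow (by positivity) h1 (by positivity)
    rw [← hyε, ← Real.rpow_mul (by positivity), mul_one_div, mul_div_assoc,
      div_self hβne, mul_one] at h2
    exact h2
  have hRsub : Ioo (x₀/2) x₀ ×ˢ Ioo 0 yε ⊆ S := by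
    rintro ⟨x, y⟩ ⟨⟨hx1, hx2⟩, hy1, hy2⟩
    have hx0 : 0 < x := lt_trans (by positivity) hx1
    refine ⟨⟨hx0, hx2, hy1, ?_⟩, ?_⟩
    · calc y < yε := hy2
        _ < (x₀/2) ^ m := hyεlt
        _ ≤ x ^ m := Real.rpow_le_rpow (by positivity) hx1.le hm.le
    · have h3 : y ^ β < yε ^ β := Real.rpow_lt_rpow hy1.le hy2 hβ0
      have h4 : x ^ α ≤ x₀ ^ α := Real.rpow_le_rpow hx0.le hx2.le hα
      have h5 : a * x ^ α * y ^ β < ε := by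
        have hyb : 0 < y ^ β := Real.rpow_pos_of_pos hy1 _
        have hstep : a * x ^ α * y ^ β ≤ a * x₀ ^ α * y ^ β :=
          mul_le_mul_of_nonneg_right (mul_le_mul_of_nonneg_left h4 ha.le) hyb.le
        have hstep2 : a * x₀ ^ α * y ^ β < a * x₀ ^ α * (ε / (a * x₀ ^ α)) := by
          rw [← hyεβ]
          exact mul_lt_mul_of_pos_left h3 (by positivity)
        have heq2 : a * x₀ ^ α * (ε / (a * x₀ ^ α)) = ε := by field_simp
        linarith
      have hpos : 0 < a * x ^ α * y ^ β := by
        have : 0 < x ^ α := Real.rpow_pos_of_pos hx0 _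
        have : 0 < y ^ β := Real.rpow_pos_of_pos hy1 _
        positivity
      rw [abs_of_pos hpos]; exact h5
  have hRvol : (volume (Ioo (x₀/2) x₀ ×ˢ Ioo 0 yε)).toReal = (x₀/2) * yε := by
    have e1 : volume (Ioo (x₀/2) x₀ ×ˢ Ioo 0 yε)
        = ENNReal.ofReal (x₀ - x₀/2) * ENNReal.ofReal (yε - 0) := by
      rw [Measure.volume_eq_prod, Measure.prod_prod, Real.volume_Ioo, Real.volume_Ioo]
    have h8 : (0:ℝ) ≤ x₀ - x₀/2 := by linarith
    have h9 : (0:ℝ) ≤ (x₀ - x₀/2) * (yε - 0) := by nlinarith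
    rw [e1, ← ENNReal.ofReal_mul h8, ENNReal.toReal_ofReal h9]
    ring
  have hlowerR : (x₀/2) * yε ≤ (volume S).toReal := by
    rw [← hRvol]
    exact ENNReal.toReal_mono hS_ne_top (measure_mono hRsub)
  constructor
  · refine lt_of_lt_of_le ?_ hlowerR
    have : (x₀/2) * yε = P * X * E / 2 := by rw [hyεeq, hXr]; ring
    rw [this]
    nlinarith [mul_pos (mul_pos hP0 hXpos) hEpos]
  · refine lt_of_le_of_lt hupper ?_
    have hU : (ε/a)^(1/β) * (x₀ ^ (r+1) / (r+1)) = P * X * E * (β/(β-α)) := by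
      rw [hEP, hr1, ← hX]
      field_simp
    rw [hU]
    have h6 : 0 < β / (β - α) := div_pos hβ0 hβα
    nlinarith [mul_pos (mul_pos (mul_pos hP0 hXpos) hEpos) h6]
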